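/- Let L : V → V be a self-adjoint operator on a 2-dimensional real inner product space with eigenvalues λ₁ > 0 > λ₂ and orthonormal eigenbasis (e₁, e₂). Let ξ ∈ V satisfy λ₁⟨ξ,e₂⟩² + λ₂⟨ξ,e₁⟩² = 0, let Z = ⟨ξ,e₁⟩e₁ − ⟨ξ,e₂⟩e₂, and let v = (⟨ξ,e₁⟩² + ⟨ξ,e₂⟩²)/(λ₁ − λ₂). Then the symmetric part of the bilinear form (α,β) ↦ ⟨Z,α⟩⟨ξ,β⟩ equals v times the bilinear form (α,β) ↦ ⟨Lα,β⟩; that is, (1/2)(⟨Z,α⟩⟨ξ,β⟩ + ⟨Z,β⟩⟨ξ,α⟩) = v⟨Lα,β⟩ for all α, β ∈ V. -/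
import Mathlib


open scoped RealInnerProductSpace

theorem stmt8 {V : Type*} [NormedAddCommGroup V] [InnerProductSpace ℝ V]
    (e : OrthonormalBasis (Fin 2) ℝ V) (L : V →ₗ[ℝ] V)
    (hsym : ∀ x y : V, ⟪L x, y⟫ = ⟪x, L y⟫)
    (l1 l2 : ℝ) (hl1 : 0 < l1) (hl2 : l2 < 0)
    (he1 : L (e 0) = l1 • e 0) (he2 : L (e 1) = l2 • e 1)
    (ξ : V) (hξ : l1 * ⟪ξ, e 1⟫ ^ 2 + l2 * ⟪ξ, e 0⟫ ^ 2 = 0)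
    (Z : V) (hZ : Z = ⟪ξ, e 0⟫ • e 0 - ⟪ξ, e 1⟫ • e 1)
    (v : ℝ) (hv : v = (⟪ξ, e 0⟫ ^ 2 + ⟪ξ, e 1⟫ ^ 2) / (l1 - l2)) :
    ∀ α β : V, (1 / 2) * (⟪Z, α⟫ * ⟪ξ, β⟫ + ⟪Z, β⟫ * ⟪ξ, α⟫) = v * ⟪L α, β⟫ := by
  intro α β
  have hexp : ∀ x : V, x = ⟪e 0, x⟫ • e 0 + ⟪e 1, x⟫ • e 1 := by
    intro x
    have := e.sum_repr' x
    rw [Fin.sum_univ_two] at this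
    exact this.symm
  have hite := orthonormal_iff_ite.mp e.orthonormal
  have h01 : ⟪e 0, e 1⟫ = (0:ℝ) := by simpa using hite 0 1
  have h00 : ⟪e 0, e 0⟫ = (1:ℝ) := by simpa using hite 0 0
  have h11 : ⟪e 1, e 1⟫ = (1:ℝ) := by simpa using hite 1 1
  have h10 : ⟪e 1, e 0⟫ = (0:ℝ) := by simpa using hite 1 0
  have hLa : ⟪L α, β⟫ = l1 * ⟪e 0, α⟫ * ⟪e 0, β⟫ + l2 * ⟪e 1, α⟫ * ⟪e 1, β⟫ := by
    conv_lhs => rw [hexp α, hexp β]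
    simp only [map_add, map_smul, he1, he2, smul_smul, inner_add_add_self,
      inner_add_left, inner_add_right, real_inner_smul_left, real_inner_smul_right,
      h00, h01, h10, h11]
    ring
  have hZa : ∀ w : V, ⟪Z, w⟫ = ⟪ξ, e 0⟫ * ⟪e 0, w⟫ - ⟪ξ, e 1⟫ * ⟪e 1, w⟫ := by
    intro w
    rw [hZ]
    simp [inner_sub_left, real_inner_smul_left]
  have hxa : ∀ w : V, ⟪ξ, w⟫ = ⟪ξ, e 0⟫ * ⟪e 0, w⟫ + ⟪ξ, e 1⟫ * ⟪e 1, w⟫ := by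
    intro w
    conv_lhs => rw [hexp w]
    simp only [inner_add_right, real_inner_smul_right]
    ring
  rw [hLa, hZa α, hZa β, hxa α, hxa β, hv]
  have hne : l1 - l2 ≠ 0 := by linarith
  field_simp
  linear_combination (-2 * ⟪e 0, α⟫ * ⟪e 0, β⟫ - 2 * ⟪e 1, α⟫ * ⟪e 1, β⟫) * hξ
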